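/- Let S be a string in which the character σ occurs exactly ℓ ≥ 2 times, and let Y be an Algorithm-1 output for S and σ. Then for every string Z such that ZZ is a subsequence of S and YY is a subsequence of ZZ, the square subsequence ZZ is not right-extendable; that is, there is no character y such that ZyZy is a subsequence of S. -/

import Mathlib

open List

variable {α : Type*}

/-- The substring of `S` from 1-indexed position `a` to position `b`, inclusive
(empty when `a > b`). -/
def substr (S : List α) (a b : ℕ) : List α := (S.drop (a - 1)).take (b + 1 - a)

/-- `X` is a square subsequence of `S`. -/
def IsSquareSubseq (S X : List α) : Prop := (∃ Y, X = Y ++ Y) ∧ X <+ S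

/-- `X` is a maximal square subsequence of `S`: it is a square subsequence of `S` and
is not a proper subsequence of any other square subsequence of `S`. -/
def IsMaxSquareSubseq (S X : List α) : Prop :=
  IsSquareSubseq S X ∧ ∀ X', IsSquareSubseq S X' → X <+ X' → X' = X

/-- The square subsequence `Y ++ Y` is right-extendable in `S`. -/
def RightExtendable (S Y : List α) : Prop := ∃ y : α, Y ++ [y] ++ Y ++ [y] <+ S

/-- The square subsequence `Y ++ Y` is left-extendable in `S`. -/
def LeftExtendable (S Y : List α) : Prop := ∃ y : α, [y] ++ Y ++ [y] ++ Y <+ S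

/-- The square subsequence `Y ++ Y` is inner-extendable in `S`. -/
def InnerExtendable (S Y : List α) : Prop :=
  ∃ (y : α) (Y₁ Y₂ : List α), Y = Y₁ ++ Y₂ ∧ Y₁ ≠ [] ∧ Y₂ ≠ [] ∧
    Y₁ ++ [y] ++ Y₂ ++ Y₁ ++ [y] ++ Y₂ <+ S

/-- `X` is a `k`-repeating subsequence of `S`: the `k`-fold concatenation of `X`
is a subsequence of `S`. -/
def IsKRep (k : ℕ) (S X : List α) : Prop := (List.replicate k X).flatten <+ S

/-- `X` is a maximal `k`-repeating subsequence of `S`: the only `k`-repeating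
subsequence of `S` having `X` as a subsequence is `X` itself. -/
def IsMaxKRep (k : ℕ) (S X : List α) : Prop :=
  IsKRep k S X ∧ ∀ Y, IsKRep k S Y → X <+ Y → Y = X

/-- A `σ`-split point for `A` and `B` in `S`: a strictly increasing `k`-tuple of
1-indexed positions of `S` carrying `σ`, such that around each position `p i` one
can place `A` immediately to its left and `B` immediately to its right within a
window `[a i, b i]`, with consecutive windows disjoint (`b i < a (i+1)`). -/
def IsSplitPoint (S : List α) (σ : α) (A B : List α) (k : ℕ) (p : Fin k → ℕ) : Prop :=
  StrictMono p ∧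
  (∀ i, 1 ≤ p i ∧ p i ≤ S.length ∧ substr S (p i) (p i) = [σ]) ∧
  ∃ a b : Fin k → ℕ,
    (∀ i, 1 ≤ a i ∧ a i ≤ p i ∧ p i ≤ b i ∧ b i ≤ S.length ∧
      A <+ substr S (a i) (p i - 1) ∧ B <+ substr S (p i + 1) (b i)) ∧
    ∀ i j : Fin k, (i : ℕ) + 1 = (j : ℕ) → b i < a j

/-- A `σ`-start for `σ^r` in `S`: a strictly increasing `k`-tuple of 1-indexed
positions of `S` carrying `σ`, such that (with `p (k+1) = |S| + 1`) the string
`σ^r` is a subsequence of `S[p j .. p (j+1) − 1]` for every `j`. -/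
def IsSigmaStart (S : List α) (σ : α) (r k : ℕ) (p : Fin k → ℕ) : Prop :=
  StrictMono p ∧
  (∀ i, 1 ≤ p i ∧ p i ≤ S.length ∧ substr S (p i) (p i) = [σ]) ∧
  ∀ i : Fin k, List.replicate r σ <+
    substr S (p i) ((if h : (i : ℕ) + 1 < k then p ⟨(i : ℕ) + 1, h⟩ else S.length + 1) - 1)

/-- `W` is a maximal common subsequence of `T₁` and `T₂` containing `X`. -/
def IsMCSContaining (T₁ T₂ X W : List α) : Prop :=
  X <+ W ∧ W <+ T₁ ∧ W <+ T₂ ∧ ∀ W', W <+ W' → W' <+ T₁ → W' <+ T₂ → W' = W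

/-- `p` is the 1-indexed position of the `t`-th occurrence (1-indexed `t`) of `σ` in `S`:
`S[p] = σ` and exactly `t - 1` occurrences of `σ` lie strictly before position `p`. -/
def NthOccPos [DecidableEq α] (S : List α) (σ : α) (t p : ℕ) : Prop :=
  1 ≤ p ∧ p ≤ S.length ∧ substr S p p = [σ] ∧ (substr S 1 (p - 1)).count σ = t - 1

/-- `j` is the leftmost anchor of `Y` with position `i` in `S`: the smallest index `j`
such that `Y` is a subsequence of `S[i..j]`. -/
def LeftmostAnchor (S Y : List α) (i j : ℕ) : Prop :=
  Y <+ substr S i j ∧ ∀ j', Y <+ substr S i j' → j ≤ j'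

/-- `Y` is an Algorithm-1 output for `S` and `σ` (Algorithm 1 of the paper), where
`ℓ = count σ S` and `e = ⌊ℓ/2⌋`. -/
def Alg1Output [DecidableEq α] (S : List α) (σ : α) (Y : List α) : Prop :=
  ∃ (i1 ie1 : ℕ) (Y₀ : List α),
    NthOccPos S σ 1 i1 ∧
    NthOccPos S σ (S.count σ / 2 + 1) ie1 ∧
    IsMCSContaining (substr S i1 (ie1 - 1)) (substr S ie1 S.length)
      (List.replicate (S.count σ / 2) σ) Y₀ ∧
    ((Y = Y₀ ∧ (Odd (S.count σ) → ∀ ie2, NthOccPos S σ (S.count σ / 2 + 2) ie2 →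
        ¬ Y₀ <+ substr S ie2 S.length)) ∨
     (Odd (S.count σ) ∧ ∃ ie2, NthOccPos S σ (S.count σ / 2 + 2) ie2 ∧
        Y₀ <+ substr S ie2 S.length ∧
        IsMCSContaining (substr S i1 (ie2 - 1)) (substr S ie2 S.length) Y₀ Y))

/-- `Z` is an Algorithm-2 output for `S` and `σ` built from the Algorithm-1 output `Y`
(Algorithm 2 of the paper). -/
def Alg2Output [DecidableEq α] (S : List α) (σ : α) (Y Z : List α) : Prop :=
  ∃ (i1 i2 j1 : ℕ) (Z₀ : List α),
    NthOccPos S σ 1 i1 ∧ NthOccPos S σ 2 i2 ∧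
    LeftmostAnchor S Y i1 j1 ∧
    IsMCSContaining (substr S 1 j1) (substr S (j1 + 1) S.length) Y Z₀ ∧
    ((Z = Z₀ ∧ (Odd (S.count σ) → ∀ j2, LeftmostAnchor S Y i2 j2 →
        ¬ Z₀ <+ substr S (j2 + 1) S.length)) ∨
     (Odd (S.count σ) ∧ ∃ j2, LeftmostAnchor S Y i2 j2 ∧
        Z₀ <+ substr S (j2 + 1) S.length ∧
        IsMCSContaining (substr S 1 j2) (substr S (j2 + 1) S.length) Z₀ Z))


section MyHelpers
variable {α : Type*} [DecidableEq α]


lemma my_take_pos_cons (a : α) (l : List α) {k : ℕ} (hk : 0 < k) :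
    (a :: l).take k = a :: l.take (k - 1) := by
  cases k with
  | zero => omega
  | succ n => simp

/-- If `Q ++ σ::R <+ σ::V` and `V` has no more `σ`s than `R`, then `Q = []`. -/
lemma my_lemF {σ : α} {Q R V : List α}
    (h : Q ++ σ :: R <+ σ :: V) (hc : V.count σ ≤ R.count σ) : Q = [] := by
  cases Q with
  | nil => rfl
  | cons q Q' =>
    exfalso
    cases h with
    | cons _ h' =>
      have := h'.count_le σ
      simp [List.count_append, List.count_cons] at this
      omega
    | cons_cons _ h' =>
      have := h'.count_le σ
      simp [List.count_append, List.count_cons] at this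
      omega

/-- Split a sublist relation `P ++ σ::W <+ G ++ H` so that the `σ::W` part lands in `H`. -/
lemma my_split_left {σ : α} {P W G H : List α}
    (h : P ++ σ :: W <+ G ++ H) (hc : G.count σ ≤ P.count σ) :
    ∃ l₁ P₂, P = l₁ ++ P₂ ∧ l₁ <+ G ∧ P₂ ++ σ :: W <+ H := by
  rw [List.sublist_append_iff] at h
  obtain ⟨l₁, l₂, heq, h₁, h₂⟩ := h
  have hl₁take : l₁ = (P ++ σ :: W).take l₁.length := by
    rw [heq, List.take_left]
  have hl₂drop : l₂ = (P ++ σ :: W).drop l₁.length := by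
    rw [heq, List.drop_left]
  have hlen : l₁.length ≤ P.length := by
    by_contra hlt
    push_neg at hlt
    have hcl₁ : P.count σ + 1 ≤ l₁.count σ := by
      rw [hl₁take, List.take_append,
        List.take_of_length_le (le_of_lt hlt),
        my_take_pos_cons σ W (by omega)]
      simp [List.count_append, List.count_cons]
    have := h₁.count_le σ
    omega
  have hl₁P : l₁ = P.take l₁.length := by
    rw [hl₁take, List.take_append, Nat.sub_eq_zero_of_le hlen]
    simp
  refine ⟨l₁, P.drop l₁.length, ?_, h₁, ?_⟩
  · conv_lhs => rw [← List.take_append_drop l₁.length P]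
    exact congrArg (· ++ P.drop l₁.length) hl₁P.symm
  · have hl₂ : l₂ = P.drop l₁.length ++ σ :: W := by
      rw [hl₂drop, List.drop_append, Nat.sub_eq_zero_of_le hlen]
      simp
    rwa [← hl₂]

lemma my_lemD {σ : α} {P W G H : List α}
    (h : P ++ σ :: W <+ G ++ H) (hc : G.count σ ≤ P.count σ) : σ :: W <+ H := by
  obtain ⟨l₁, P₂, _, _, h₂⟩ := my_split_left h hc
  exact (List.sublist_append_right P₂ _).trans h₂

/-- Split off the part before the first occurrence of `σ`. -/
lemma my_split_head {σ : α} {X : List α} (h : 1 ≤ X.count σ) :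
    ∃ N V, X = N ++ σ :: V ∧ N.count σ = 0 := by
  induction X with
  | nil => simp at h
  | cons x t ih =>
    by_cases hx : x = σ
    · exact ⟨[], t, by simp [hx], by simp⟩
    · have ht : 1 ≤ t.count σ := by
        rw [List.count_cons] at h
        simpa [hx] using h
      obtain ⟨N, V, hEq, hN⟩ := ih ht
      exact ⟨x :: N, V, by simp [hEq], by simp [List.count_cons, hx, hN]⟩

lemma my_head_eq {σ : α} {X M : List α}
    (h : X <+ σ :: M) (hc : M.count σ < X.count σ) :
    ∃ X', X = σ :: X' ∧ X' <+ M := by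
  cases h with
  | cons _ h' => exact absurd (h'.count_le σ) (by omega)
  | cons_cons _ h' => exact ⟨_, rfl, h'⟩

lemma my_sq_sub_sq {Y Z : List α} (h : Y ++ Y <+ Z ++ Z) : Y <+ Z := by
  rw [List.sublist_append_iff] at h
  obtain ⟨l₁, l₂, heq, h₁, h₂⟩ := h
  rcases le_or_gt Y.length l₁.length with hl | hl
  · have hY : Y = l₁.take Y.length := by
      have := congrArg (List.take Y.length) heq
      rw [List.take_left, List.take_append,
        Nat.sub_eq_zero_of_le hl] at this
      simpa using this
    rw [hY]; exact (List.take_sublist _ _).trans h₁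
  · have hY : Y = l₂.drop (l₂.length - Y.length) := by
      have h3 := congrArg (List.drop Y.length) heq
      rw [List.drop_left, List.drop_append,
        List.drop_of_length_le (le_of_lt hl)] at h3
      have hlen := congrArg List.length heq
      simp [List.length_append] at hlen
      rw [h3]; simp; congr 1; omega
    rw [hY]; exact (List.drop_sublist _ _).trans h₂

lemma my_prefix_ext {σ : α} {S : List α} {m m' : ℕ}
    (hc : (S.take m).count σ < (S.take m').count σ) :
    ∃ W', S.take m' = S.take m ++ W' := by
  have hm : m ≤ m' := by
    by_contra h
    push_neg at h
    have hsub : S.take m' <+ S.take m := by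
      have h2 : S.take m' = (S.take m).take m' := by
        rw [List.take_take, Nat.min_eq_left (le_of_lt h)]
      rw [h2]; exact List.take_sublist _ _
    exact absurd (hsub.count_le σ) (not_le.mpr hc)
  refine ⟨(S.take m').drop m, ?_⟩
  conv_lhs => rw [← List.take_append_drop m (S.take m')]
  rw [List.take_take, Nat.min_eq_left hm]

lemma my_split_unique {σ : α} {S X₁ R₁ X₂ R₂ : List α}
    (h1 : S = X₁ ++ σ :: R₁) (h2 : S = X₂ ++ σ :: R₂)
    (hc : X₁.count σ = X₂.count σ) : X₁ = X₂ ∧ R₁ = R₂ := by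
  have key : ∀ (A₁ B₁ A₂ B₂ : List α), S = A₁ ++ σ :: B₁ → S = A₂ ++ σ :: B₂ →
      A₁.count σ = A₂.count σ → A₁.length ≤ A₂.length → A₁ = A₂ := by
    intro A₁ B₁ A₂ B₂ g1 g2 gc glen
    have hA₂ : A₂ = A₁ ++ (σ :: B₁).take (A₂.length - A₁.length) := by
      have h3 := congrArg (List.take A₂.length) (g1.symm.trans g2)
      rw [List.take_left, List.take_append,
        List.take_of_length_le glen] at h3
      exact h3.symm
    rcases Nat.eq_or_lt_of_le glen with hEq | hlt
    · rw [hA₂]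
      have h0 : A₂.length - A₁.length = 0 := by omega
      rw [h0]; simp
    · exfalso
      rw [my_take_pos_cons σ B₁ (by omega)] at hA₂
      have : A₁.count σ + 1 ≤ A₂.count σ := by
        rw [hA₂]; simp [List.count_append, List.count_cons]
      omega
  have hX : X₁ = X₂ := by
    rcases le_or_gt X₁.length X₂.length with hl | hl
    · exact key _ _ _ _ h1 h2 hc hl
    · exact (key _ _ _ _ h2 h1 hc.symm (le_of_lt hl)).symm
  refine ⟨hX, ?_⟩
  subst hX
  simpa using List.append_cancel_left (h1.symm.trans h2)


lemma my_nthOcc_split {S : List α} {σ : α} {t p : ℕ} (h : NthOccPos S σ t p) :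
    ∃ V, S = S.take (p - 1) ++ σ :: V ∧ (S.take (p - 1)).length = p - 1 ∧
      (S.take (p - 1)).count σ = t - 1 := by
  obtain ⟨h1, h2, h3, h4⟩ := h
  unfold substr at h3 h4
  rw [show p + 1 - p = 1 by omega] at h3
  obtain ⟨V, hV⟩ : ∃ V, S.drop (p - 1) = σ :: V := by
    cases hD : S.drop (p - 1) with
    | nil => rw [hD] at h3; simp at h3
    | cons a u =>
      rw [hD] at h3
      simp at h3
      exact ⟨u, by rw [h3]⟩
  refine ⟨V, ?_, ?_, ?_⟩
  · conv_lhs => rw [← List.take_append_drop (p - 1) S]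
    rw [hV]
  · rw [List.length_take]; omega
  · rw [show (1:ℕ) - 1 = 0 from rfl, List.drop_zero,
      show p - 1 + 1 - 1 = p - 1 by omega] at h4
    exact h4

lemma my_substr_of_split {S X Mid R : List α} {a b : ℕ} (hS : S = X ++ (Mid ++ R))
    (ha : X.length = a - 1) (hb : b + 1 - a = Mid.length) :
    substr S a b = Mid := by
  unfold substr
  conv_lhs => rw [hS]
  rw [List.drop_left' ha, hb, List.take_left]

lemma my_mk_nthOcc {S Pre V : List α} {σ : α} {t : ℕ} (hS : S = Pre ++ σ :: V)
    (hc : Pre.count σ = t - 1) (ht : 1 ≤ t) :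
    NthOccPos S σ t (Pre.length + 1) ∧ substr S (Pre.length + 1) S.length = σ :: V := by
  have hlen : S.length = Pre.length + 1 + V.length := by
    rw [hS, List.length_append, List.length_cons]; omega
  constructor
  · refine ⟨by omega, by omega, ?_, ?_⟩
    · unfold substr
      rw [Nat.add_sub_cancel, show Pre.length + 1 + 1 - (Pre.length + 1) = 1 by omega]
      conv_lhs => rw [hS]
      rw [List.drop_left]
      rfl
    · unfold substr
      rw [show (1:ℕ) - 1 = 0 from rfl, List.drop_zero, Nat.add_sub_cancel,
        show Pre.length + 1 - 1 = Pre.length by omega]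
      conv_lhs => rw [hS]
      rw [List.take_left, hc]
  · unfold substr
    rw [Nat.add_sub_cancel]
    conv_lhs => rw [hS]
    rw [List.drop_left]
    exact List.take_of_length_le (by rw [List.length_cons, List.length_append, List.length_cons]; omega)

end MyHelpers

/-- If `σ` occurs exactly `ℓ ≥ 2` times in `S` and `Y` is an Algorithm-1
output for `S` and `σ`, then every square subsequence `ZZ` of `S` containing `YY` is not
right-extendable in `S`. -/
theorem alg1_output_not_rightExtendable {α : Type*} [DecidableEq α] (S : List α) (σ : α)
    (hℓ : 2 ≤ S.count σ) (Y : List α) (hY : Alg1Output S σ Y) :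
    ∀ Z : List α, Z ++ Z <+ S → Y ++ Y <+ Z ++ Z → ¬ RightExtendable S Z := by
  intro Z _hZZ hYY hre
  obtain ⟨y, hy⟩ := hre
  obtain ⟨i1, ie1, Y₀, hocc1, hocc2, hmcs, hcase⟩ := hY
  obtain ⟨V₁, hS1, hlenU, hcntU⟩ := my_nthOcc_split hocc1
  obtain ⟨V₂, hS2, hlenU₂, hcntU₂⟩ := my_nthOcc_split hocc2
  set e := S.count σ / 2 with hedef
  have he1 : 1 ≤ e := by omega
  simp only [Nat.add_sub_cancel] at hcntU₂
  rw [show (1:ℕ) - 1 = 0 from rfl] at hcntU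
  have hi1 : 1 ≤ i1 := hocc1.1
  have hie1 : 1 ≤ ie1 := hocc2.1
  obtain ⟨W, hUW⟩ := my_prefix_ext (σ := σ) (S := S) (m := i1 - 1) (m' := ie1 - 1)
    (by rw [hcntU, hcntU₂]; omega)
  obtain ⟨M, rfl⟩ : ∃ M, W = σ :: M := by
    cases W with
    | nil =>
      exfalso
      rw [List.append_nil] at hUW
      rw [hUW, hcntU] at hcntU₂
      omega
    | cons w W' =>
      have h3 : σ :: V₁ = (w :: W') ++ σ :: V₂ := by
        have h4 := hS1.symm.trans hS2
        rw [hUW, List.append_assoc] at h4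
        exact List.append_cancel_left h4
      simp only [List.cons_append, List.cons.injEq] at h3
      exact ⟨W', by rw [h3.1]⟩
  have hV₁ : V₁ = M ++ σ :: V₂ := by
    have h3 := hS1.symm.trans hS2
    rw [hUW, List.append_assoc] at h3
    have h4 := List.append_cancel_left h3
    simpa using h4
  -- counts
  have hcM : M.count σ = e - 1 := by
    have h3 := congrArg (List.count σ) hUW
    rw [List.count_append, hcntU, hcntU₂, List.count_cons_self] at h3
    omega
  have hStotal : S.count σ = e + 1 + V₂.count σ := by
    have h3 := congrArg (List.count σ) hS2
    rw [List.count_append, hcntU₂, List.count_cons_self] at h3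
    omega
  -- length relations
  have hUWlen : ie1 - 1 = (i1 - 1) + (M.length + 1) := by
    have h3 := congrArg List.length hUW
    rw [List.length_append, hlenU, hlenU₂, List.length_cons] at h3
    omega
  have hSlen : S.length = (ie1 - 1) + (V₂.length + 1) := by
    have h3 := congrArg List.length hS2
    rw [List.length_append, hlenU₂, List.length_cons] at h3
    omega
  -- substr identifications
  have hT₁eq : substr S i1 (ie1 - 1) = σ :: M := by
    have hSsp : S = S.take (i1 - 1) ++ (σ :: M ++ σ :: V₂) := by
      conv_lhs => rw [hS2, hUW]
      rw [List.append_assoc]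
    exact my_substr_of_split hSsp hlenU (by rw [List.length_cons]; omega)
  have hT₂eq : substr S ie1 S.length = σ :: V₂ :=
    my_substr_of_split (Mid := σ :: V₂) (R := ([] : List α))
      (by rw [List.append_nil]; exact hS2) hlenU₂ (by rw [List.length_cons]; omega)
  rw [hT₁eq, hT₂eq] at hmcs
  -- facts about Y₀
  have hY₀c : e ≤ Y₀.count σ := by
    have h3 := hmcs.1.count_le σ
    simpa [List.count_replicate] using h3
  obtain ⟨Y₀t, hY₀head, -⟩ := my_head_eq hmcs.2.1 (by omega)
  have hYZ : Y <+ Z := my_sq_sub_sq hYY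
  have hY₀Y : Y₀ <+ Y := by
    rcases hcase with ⟨h1, -⟩ | ⟨-, ie2x, -, -, hm2⟩
    · rw [h1]
    · exact hm2.1
  have hY₀Z : Y₀ <+ Z := hY₀Y.trans hYZ
  have hcZ_ge : e ≤ Z.count σ := le_trans hY₀c (hY₀Z.count_le σ)
  -- counting σ in the right-extended square
  have hcnt := hy.count_le σ
  simp only [List.count_append] at hcnt
  by_cases hyσ : y = σ
  · subst hyσ
    rw [List.count_cons_self, List.count_nil] at hcnt
    omega
  have hcy : List.count σ [y] = 0 := by
    rw [List.count_cons, List.count_nil]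
    simp [hyσ]
  rw [hcy] at hcnt
  have hcZ : Z.count σ = e := by omega
  -- split Z at its first σ
  obtain ⟨A, B, hZeq, hcA⟩ := my_split_head (σ := σ) (X := Z) (by omega)
  have hcB : B.count σ = e - 1 := by
    have h3 := congrArg (List.count σ) hZeq
    rw [List.count_append, List.count_cons_self, hcA] at h3
    omega
  have hY₀C : Y₀ <+ σ :: B := by
    have h0 : ([] : List α) ++ σ :: Y₀t <+ A ++ σ :: B := by
      rw [List.nil_append, ← hY₀head, ← hZeq]; exact hY₀Z
    rw [hY₀head]
    exact my_lemD h0 (by rw [hcA, List.count_nil])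
  -- the master sublist, in split form
  have hL : (A ++ σ :: (B ++ [y] ++ A)) ++ σ :: (B ++ [y]) <+
      (S.take (i1 - 1) ++ σ :: M) ++ σ :: V₂ := by
    have h0 := hy
    rw [hZeq, hS2, hUW] at h0
    have hsh : A ++ σ :: B ++ [y] ++ (A ++ σ :: B) ++ [y]
        = (A ++ σ :: (B ++ [y] ++ A)) ++ σ :: (B ++ [y]) := by simp
    rwa [hsh] at h0
  have hcP : (A ++ σ :: (B ++ [y] ++ A)).count σ = e := by
    simp only [List.count_append, List.count_cons_self, hcA, hcB, hcy]
    omega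
  have hcG : (S.take (i1 - 1) ++ σ :: M).count σ = e := by
    simp only [List.count_append, List.count_cons_self, hcntU, hcM]
    omega
  have hcWt : (B ++ [y]).count σ = e - 1 := by
    rw [List.count_append, hcB, hcy]
    omega
  obtain ⟨l₁, P₂, hPsplit, hl₁, h₂⟩ := my_split_left hL (le_of_eq (hcG.trans hcP.symm))
  -- small sublist facts
  have hWtB : σ :: (B ++ [y]) <+ σ :: (B ++ [y] ++ A) :=
    List.Sublist.cons₂ σ (List.sublist_append_left _ _)
  have hCB : σ :: B <+ σ :: (B ++ [y]) :=
    List.Sublist.cons₂ σ (List.sublist_append_left _ _)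
  -- the common final contradiction (scenario: second copy starts at occurrence e+1)
  have hfinal : σ :: (B ++ [y]) <+ σ :: M → σ :: (B ++ [y]) <+ σ :: V₂ → False := by
    intro hT1 hT2
    have heq := hmcs.2.2.2 _ (hY₀C.trans hCB) hT1 hT2
    have hlen1 := hY₀C.length_le
    have hlen2 := congrArg List.length heq
    simp only [List.length_cons, List.length_append] at hlen1 hlen2
    omega
  rcases Nat.even_or_odd (S.count σ) with hpar | hpar
  · -- EVEN case
    obtain ⟨k, hk⟩ := hpar
    have hcV₂ : V₂.count σ = e - 1 := by omega
    have hP₂ : P₂ = [] := my_lemF h₂ (le_of_eq (hcV₂.trans hcWt.symm))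
    subst hP₂
    rw [List.append_nil] at hPsplit
    rw [List.nil_append] at h₂
    rw [← hPsplit] at hl₁
    have hT1' : σ :: (B ++ [y] ++ A) <+ σ :: M :=
      my_lemD hl₁ (le_of_eq (hcntU.trans hcA.symm))
    exact hfinal (hWtB.trans hT1') h₂
  · -- ODD case
    obtain ⟨k, hk⟩ := hpar
    have hcV₂ : V₂.count σ = e := by omega
    obtain ⟨N, V₃, hV₂eq, hcN⟩ := my_split_head (σ := σ) (X := V₂) (by omega)
    have hcV₃ : V₃.count σ = e - 1 := by
      have h3 := congrArg (List.count σ) hV₂eq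
      rw [List.count_append, List.count_cons_self, hcN] at h3
      omega
    have h₂' : P₂ ++ σ :: (B ++ [y]) <+ (σ :: N) ++ σ :: V₃ := by
      rw [hV₂eq] at h₂
      simpa using h₂
    rw [List.sublist_append_iff] at h₂'
    obtain ⟨m₁, m₂, hme, hm₁, hm₂⟩ := h₂'
    have hm₁take : m₁ = (P₂ ++ σ :: (B ++ [y])).take m₁.length := by
      rw [hme, List.take_left]
    have hm₂drop : m₂ = (P₂ ++ σ :: (B ++ [y])).drop m₁.length := by
      rw [hme, List.drop_left]
    rcases le_or_gt m₁.length P₂.length with hle | hlt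
    · -- Scenario 2 : the second copy of (σ-part of) Z starts at occurrence e+2
      have hm₁P : m₁ = P₂.take m₁.length := by
        rw [hm₁take, List.take_append, Nat.sub_eq_zero_of_le hle]
        simp
      have hm₂eq : m₂ = P₂.drop m₁.length ++ σ :: (B ++ [y]) := by
        rw [hm₂drop, List.drop_append, Nat.sub_eq_zero_of_le hle]
        simp
      have hP₃ : P₂.drop m₁.length = [] := by
        refine my_lemF (V := V₃) (σ := σ) ?_ (le_of_eq (hcV₃.trans hcWt.symm))
        rw [← hm₂eq]; exact hm₂
      have hm₂' : m₂ = σ :: (B ++ [y]) := by rw [hm₂eq, hP₃, List.nil_append]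
      have hT2E : σ :: (B ++ [y]) <+ σ :: V₃ := hm₂' ▸ hm₂
      have hP₂m : P₂ = m₁ := by
        conv_lhs => rw [← List.take_append_drop m₁.length P₂]
        rw [hP₃, List.append_nil, ← hm₁P]
      have hPfull : A ++ σ :: (B ++ [y] ++ A) <+ (S.take (i1 - 1) ++ σ :: M) ++ σ :: N := by
        rw [hPsplit, hP₂m]
        exact List.Sublist.append hl₁ hm₁
      have hT1E : σ :: (B ++ [y]) <+ σ :: M ++ σ :: N := by
        have h5 : A ++ σ :: (B ++ [y] ++ A) <+ S.take (i1 - 1) ++ (σ :: M ++ σ :: N) := by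
          rwa [← List.append_assoc]
        exact hWtB.trans (my_lemD h5 (le_of_eq (hcntU.trans hcA.symm)))
      have hSsplit3 : S = ((S.take (i1 - 1) ++ σ :: M) ++ σ :: N) ++ σ :: V₃ := by
        conv_lhs => rw [hS2, hUW, hV₂eq]
        simp
      have hcntPre : ((S.take (i1 - 1) ++ σ :: M) ++ σ :: N).count σ = e + 1 := by
        simp only [List.count_append, List.count_cons_self, hcntU, hcM, hcN]
        omega
      rcases hcase with ⟨rfl, ha2⟩ | ⟨-, ie2, hocc3, -, hmcs2⟩
      · -- case (a)
        obtain ⟨hocc3, hsub3⟩ := my_mk_nthOcc (t := e + 2) hSsplit3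
          (by rw [hcntPre]; omega) (by omega)
        exact ha2 ⟨k, by omega⟩ _ hocc3
          (by rw [hsub3]; exact (hY₀C.trans hCB).trans hT2E)
      · -- case (b)
        have hie2 : 1 ≤ ie2 := hocc3.1
        obtain ⟨V₃', hS3, hlenU₃, hcntU₃⟩ := my_nthOcc_split hocc3
        obtain ⟨hU₃eq, hV₃eq⟩ := my_split_unique hS3 hSsplit3
          (by rw [hcntU₃, hcntPre]; omega)
        have hT₂'eq : substr S ie2 S.length = σ :: V₃' := by
          refine my_substr_of_split (Mid := σ :: V₃') (R := ([] : List α))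
            (by rw [List.append_nil]; exact hS3) hlenU₃ ?_
          have h6 := congrArg List.length hS3
          rw [List.length_append, hlenU₃, List.length_cons] at h6
          rw [List.length_cons]
          omega
        rw [hV₃eq] at hT₂'eq
        have hT₁'eq : substr S i1 (ie2 - 1) = σ :: M ++ σ :: N := by
          have hSsp : S = S.take (i1 - 1) ++ ((σ :: M ++ σ :: N) ++ σ :: V₃) := by
            conv_lhs => rw [hSsplit3]
            simp
          refine my_substr_of_split hSsp hlenU ?_
          · have h6 := congrArg List.length hU₃eq
            rw [hlenU₃, List.length_append, List.length_append, hlenU,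
              List.length_cons, List.length_cons] at h6
            rw [List.length_append, List.length_cons, List.length_cons]
            omega
        rw [hT₁'eq, hT₂'eq] at hmcs2
        have hYc : e ≤ Y.count σ := le_trans hY₀c (hY₀Y.count_le σ)
        obtain ⟨Yt, hYhead, -⟩ := my_head_eq hmcs2.2.2.1 (by omega)
        have hYC : Y <+ σ :: B := by
          have h0 : ([] : List α) ++ σ :: Yt <+ A ++ σ :: B := by
            rw [List.nil_append, ← hYhead, ← hZeq]; exact hYZ
          rw [hYhead]
          exact my_lemD h0 (by rw [hcA, List.count_nil])
        have heqW := hmcs2.2.2.2 _ (hYC.trans hCB) hT1E hT2E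
        have hlen1 := hYC.length_le
        have hlen2 := congrArg List.length heqW
        simp only [List.length_cons, List.length_append] at hlen1 hlen2
        omega
    · -- Scenario 1 : the second copy starts at occurrence e+1
      have hm₁shape : m₁ = P₂ ++ σ :: ((B ++ [y]).take (m₁.length - P₂.length - 1)) := by
        conv_lhs => rw [hm₁take]
        rw [List.take_append, List.take_of_length_le (le_of_lt hlt),
          my_take_pos_cons σ (B ++ [y]) (by omega)]
      have hP₂nil : P₂ = [] := by
        have h7 : P₂ ++ σ :: ((B ++ [y]).take (m₁.length - P₂.length - 1)) <+ σ :: N := by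
          rw [← hm₁shape]; exact hm₁
        exact my_lemF h7 (by rw [hcN]; exact Nat.zero_le _)
      subst hP₂nil
      rw [List.append_nil] at hPsplit
      rw [List.nil_append] at h₂
      rw [← hPsplit] at hl₁
      have hT1' : σ :: (B ++ [y] ++ A) <+ σ :: M :=
        my_lemD hl₁ (le_of_eq (hcntU.trans hcA.symm))
      exact hfinal (hWtB.trans hT1') h₂
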